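/- Let N ≥ 2, α, β ∈ ℝ, ε > 0, and let a ∈ ℝ^N be such that every a_i is an integer multiple of π (an antipodal state, including in-phase synchrony). Then the characteristic polynomial of the linearization matrix J(a) equals X · (X + ε)^{N(N−1)+1} · (X² + (ε − cos α sin β) X − ε sin(α+β))^{N−1}. -/

import Mathlib

open Real Matrix Polynomial

/-- The phase block of the linearization of the adaptive phase-oscillator network at a
one-cluster state with phase lags `a`. -/
noncomputable def linA (N : ℕ) (α β : ℝ) (a : Fin N → ℝ) : Matrix (Fin N) (Fin N) ℝ :=
  Matrix.of fun i j =>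
    if i = j then
      -(1 / 2) * Real.sin (α - β) - (1 / (N : ℝ)) * Real.sin β * Real.cos α
        + (1 / (2 * (N : ℝ))) * ∑ k, Real.sin (2 * (a i - a k) + α + β)
    else (1 / (2 * (N : ℝ))) * (Real.sin (α - β) - Real.sin (2 * (a i - a j) + α + β))

/-- The phase-to-coupling block of the linearization. -/
noncomputable def linB (N : ℕ) (α : ℝ) (a : Fin N → ℝ) :
    Matrix (Fin N) (Fin N × Fin N) ℝ :=
  Matrix.of fun k p =>
    if k = p.1 then -(1 / (N : ℝ)) * Real.sin (a p.1 - a p.2 + α) else 0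

/-- The coupling-to-phase block of the linearization. -/
noncomputable def linC (N : ℕ) (β ε : ℝ) (a : Fin N → ℝ) :
    Matrix (Fin N × Fin N) (Fin N) ℝ :=
  Matrix.of fun p l =>
    if p.1 = p.2 then 0
    else if l = p.1 then -ε * Real.cos (a p.1 - a p.2 + β)
    else if l = p.2 then ε * Real.cos (a p.1 - a p.2 + β)
    else 0

/-- The linearization matrix `J(a)` of the adaptive phase-oscillator network at a
one-cluster state with phase lags `a`. -/
noncomputable def linJ (N : ℕ) (α β ε : ℝ) (a : Fin N → ℝ) :
    Matrix (Fin N ⊕ Fin N × Fin N) (Fin N ⊕ Fin N × Fin N) ℝ :=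
  Matrix.fromBlocks (linA N α β a) (linB N α a) (linC N β ε a)
    (-(ε • (1 : Matrix (Fin N × Fin N) (Fin N × Fin N) ℝ)))

lemma antip_sin {t : ℝ} (ht : ∃ m : ℤ, t = m * Real.pi) : Real.sin t = 0 := by
  obtain ⟨m, rfl⟩ := ht; exact Real.sin_int_mul_pi m

lemma antip_cos_sq {t : ℝ} (ht : ∃ m : ℤ, t = m * Real.pi) :
    Real.cos t * Real.cos t = 1 := by
  have h := Real.sin_sq_add_cos_sq t
  have hs := antip_sin ht
  linear_combination h - Real.sin t * hs

lemma antip_sin_add {t : ℝ} (ht : ∃ m : ℤ, t = m * Real.pi) (α : ℝ) :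
    Real.sin (t + α) = Real.cos t * Real.sin α := by
  have hs := antip_sin ht
  linear_combination Real.sin_add t α + Real.cos α * hs

lemma antip_cos_add {t : ℝ} (ht : ∃ m : ℤ, t = m * Real.pi) (β : ℝ) :
    Real.cos (t + β) = Real.cos t * Real.cos β := by
  have hs := antip_sin ht
  linear_combination Real.cos_add t β - Real.sin β * hs

lemma antip_sin_two {t : ℝ} (ht : ∃ m : ℤ, t = m * Real.pi) (α β : ℝ) :
    Real.sin (2 * t + α + β) = Real.sin (α + β) := by
  obtain ⟨m, rfl⟩ := ht
  have h1 : Real.sin (2 * ((m : ℝ) * Real.pi)) = 0 := by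
    have : (2 : ℝ) * ((m : ℝ) * Real.pi) = ((2 * m : ℤ) : ℝ) * Real.pi := by push_cast; ring
    rw [this, Real.sin_int_mul_pi]
  have h2 : Real.cos (2 * ((m : ℝ) * Real.pi)) = 1 := by
    have : (2 : ℝ) * ((m : ℝ) * Real.pi) = (m : ℝ) * (2 * Real.pi) := by ring
    rw [this, Real.cos_int_mul_two_pi]
  have e : 2 * ((m : ℝ) * Real.pi) + α + β = 2 * ((m : ℝ) * Real.pi) + (α + β) := by ring
  rw [e, Real.sin_add, h1, h2]; ring

lemma linA_antip (N : ℕ) (hN : 0 < N) (α β : ℝ) (a : Fin N → ℝ)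
    (ha : ∀ i, ∃ m : ℤ, a i = m * Real.pi) :
    linA N α β a = (Real.cos α * Real.sin β) • (1 : Matrix (Fin N) (Fin N) ℝ)
      + Matrix.of (fun _ _ => -(Real.cos α * Real.sin β / N)) := by
  have hd : ∀ i j : Fin N, ∃ m : ℤ, a i - a j = m * Real.pi := by
    intro i j
    obtain ⟨mi, hi⟩ := ha i; obtain ⟨mj, hj⟩ := ha j
    exact ⟨mi - mj, by rw [hi, hj]; push_cast; ring⟩
  have hNR : (N : ℝ) ≠ 0 := Nat.cast_ne_zero.mpr hN.ne'
  ext i j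
  by_cases hij : i = j
  · subst hij
    have hsum : ∀ k, Real.sin (2 * (a i - a k) + α + β) = Real.sin (α + β) := fun k =>
      antip_sin_two (hd i k) α β
    simp only [linA, Matrix.of_apply, if_pos rfl, ↓reduceIte, Matrix.add_apply, Matrix.smul_apply,
      Matrix.one_apply_eq, smul_eq_mul, mul_one]
    rw [Finset.sum_congr rfl (fun k _ => hsum k), Finset.sum_const, Finset.card_univ,
      Fintype.card_fin, nsmul_eq_mul]
    rw [Real.sin_add, Real.sin_sub]
    field_simp
    ring
  · simp only [linA, Matrix.of_apply, if_neg hij, Matrix.add_apply, Matrix.smul_apply,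
      Matrix.one_apply_ne hij, smul_eq_mul, mul_zero, zero_add]
    rw [antip_sin_two (hd i j) α β, Real.sin_add, Real.sin_sub]
    field_simp
    ring

lemma linBC_antip (N : ℕ) (hN : 0 < N) (α β ε : ℝ) (a : Fin N → ℝ)
    (ha : ∀ i, ∃ m : ℤ, a i = m * Real.pi) :
    linB N α a * linC N β ε a
      = (ε * Real.sin α * Real.cos β) • (1 : Matrix (Fin N) (Fin N) ℝ)
        + Matrix.of (fun _ _ => -(ε * Real.sin α * Real.cos β / N)) := by
  have hd : ∀ i j : Fin N, ∃ m : ℤ, a i - a j = m * Real.pi := by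
    intro i j
    obtain ⟨mi, hi⟩ := ha i; obtain ⟨mj, hj⟩ := ha j
    exact ⟨mi - mj, by rw [hi, hj]; push_cast; ring⟩
  have hNR : (N : ℝ) ≠ 0 := Nat.cast_ne_zero.mpr hN.ne'
  ext k l
  rw [Matrix.mul_apply, Fintype.sum_prod_type]
  have hstep : (∑ i, ∑ j, linB N α a k (i, j) * linC N β ε a (i, j) l)
      = ∑ j, linB N α a k (k, j) * linC N β ε a (k, j) l := by
    apply Finset.sum_eq_single k
    · intro i _ hik
      apply Finset.sum_eq_zero
      intro j _
      simp [linB, if_neg (Ne.symm hik)]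
    · intro h; exact absurd (Finset.mem_univ k) h
  rw [hstep]
  by_cases hlk : l = k
  · subst hlk
    have hterm : ∀ j, linB N α a l (l, j) * linC N β ε a (l, j) l
        = if j = l then 0 else ε * Real.sin α * Real.cos β / N := by
      intro j
      by_cases hjl : j = l
      · subst hjl; simp [linB, linC]
      · have hcc := antip_cos_sq (hd l j)
        simp only [linB, linC, Matrix.of_apply, eq_self_iff_true, if_true]
        rw [if_neg (show ¬ l = j from Ne.symm hjl), if_neg hjl,
          antip_sin_add (hd l j) α, antip_cos_add (hd l j) β]
        field_simp
        linear_combination (ε * Real.sin α * Real.cos β) * hcc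
    rw [Finset.sum_congr rfl (fun j _ => hterm j)]
    have hsum : (∑ j : Fin N, if j = l then (0:ℝ) else ε * Real.sin α * Real.cos β / N)
        = ∑ j : Fin N, (ε * Real.sin α * Real.cos β / N
            - if j = l then ε * Real.sin α * Real.cos β / N else 0) := by
      apply Finset.sum_congr rfl
      intro j _
      by_cases h : j = l <;> simp [h]
    rw [hsum, Finset.sum_sub_distrib, Finset.sum_const, Finset.card_univ, Fintype.card_fin,
      Finset.sum_ite_eq' Finset.univ l (fun _ => ε * Real.sin α * Real.cos β / N),
      if_pos (Finset.mem_univ l)]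
    simp only [Matrix.add_apply, Matrix.smul_apply, Matrix.one_apply_eq, smul_eq_mul, mul_one,
      Matrix.of_apply, nsmul_eq_mul]
    field_simp
    ring
  · have hterm : ∀ j, linB N α a k (k, j) * linC N β ε a (k, j) l
        = if j = l then -(ε * Real.sin α * Real.cos β / N) else 0 := by
      intro j
      by_cases hjl : j = l
      · subst hjl
        have hjk : ¬ (k = j) := fun h => hlk h.symm
        have hcc := antip_cos_sq (hd k j)
        simp only [linB, linC, Matrix.of_apply, eq_self_iff_true, if_true]
        rw [if_neg hjk, if_neg (show ¬ j = k from hlk),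
          antip_sin_add (hd k j) α, antip_cos_add (hd k j) β]
        linear_combination (-(ε * Real.sin α * Real.cos β / N)) * hcc
      · by_cases hjk : k = j
        · simp [linB, linC, if_pos hjk, hjl]
        · simp [linB, linC, if_neg hjk, if_neg hlk, if_neg (Ne.symm hjl), hjl]
    rw [Finset.sum_congr rfl (fun j _ => hterm j)]
    rw [Finset.sum_ite_eq' Finset.univ l
      (fun _ => -(ε * Real.sin α * Real.cos β / N)), if_pos (Finset.mem_univ l)]
    simp [Matrix.one_apply_ne (fun h : k = l => hlk h.symm)]

lemma eval_charpoly' {n : Type*} [Fintype n] [DecidableEq n] (M : Matrix n n ℝ) (x : ℝ) :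
    (M.charpoly).eval x = (x • (1 : Matrix n n ℝ) - M).det := by
  rw [Matrix.charpoly, ← Polynomial.coe_evalRingHom, RingHom.map_det]
  congr 1
  ext i j
  by_cases h : i = j <;>
    simp [h, charmatrix_apply, Matrix.one_apply, Matrix.diagonal_apply]

lemma det_smul_one_add_const (n : ℕ) (hn : 0 < n) (g h : ℝ) (hg : g ≠ 0) :
    (g • (1 : Matrix (Fin n) (Fin n) ℝ) + Matrix.of (fun _ _ => h)).det
      = g ^ (n - 1) * (g + n * h) := by
  have key : g • (1 : Matrix (Fin n) (Fin n) ℝ) + Matrix.of (fun _ _ => h)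
      = g • ((1 : Matrix (Fin n) (Fin n) ℝ) +
          replicateCol Unit (fun _ => h / g) * replicateRow Unit (fun _ => (1:ℝ))) := by
    ext i j
    by_cases hij : i = j <;>
      simp [hij, Matrix.mul_apply, Matrix.one_apply, mul_add, mul_div_cancel₀ _ hg]
  rw [key, Matrix.det_smul, det_one_add_replicateCol_mul_replicateRow]
  simp only [dotProduct, Finset.sum_const, Finset.card_univ, Fintype.card_fin, nsmul_eq_mul,
    mul_one, Fintype.card_fin]
  have : g ^ n = g ^ (n - 1) * g := by
    conv_lhs => rw [← Nat.succ_pred_eq_of_pos hn]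
    rw [pow_succ]
    rfl
  rw [this]
  field_simp

/-- The characteristic polynomial of the linearization at an antipodal one-cluster
state (all phases integer multiples of `π`). -/
theorem charpoly_antipodal
    (N : ℕ) (hN : 2 ≤ N) (α β ε : ℝ) (hε : 0 < ε) (a : Fin N → ℝ)
    (ha : ∀ i, ∃ m : ℤ, a i = m * Real.pi) :
    (linJ N α β ε a).charpoly =
      X * (X + C ε) ^ (N * (N - 1) + 1) *
        (X ^ 2 + C (ε - Real.cos α * Real.sin β) * X - C (ε * Real.sin (α + β))) ^ (N - 1) := by
  have hN0 : 0 < N := lt_of_lt_of_le two_pos hN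
  have hNR : (N : ℝ) ≠ 0 := Nat.cast_ne_zero.mpr hN0.ne'
  set c : ℝ := Real.cos α * Real.sin β with hc
  set d : ℝ := ε * Real.sin α * Real.cos β with hdd
  set fp : ℝ[X] := X ^ 2 + C (ε - c) * X - C (ε * Real.sin (α + β)) with hfp
  have hfpne : fp ≠ 0 := by
    intro h
    have h2 := congrArg (fun p : ℝ[X] => p.coeff 2) h
    simp [hfp, coeff_X_pow, coeff_C] at h2
  apply Polynomial.eq_of_infinite_eval_eq
  have hfin : ({x : ℝ | fp.IsRoot x} ∪ {-ε}).Finite :=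
    (Polynomial.finite_setOf_isRoot hfpne).union (Set.finite_singleton _)
  apply Set.Infinite.mono _ hfin.infinite_compl
  intro x hx
  simp only [Set.mem_compl_iff, Set.mem_union, Set.mem_setOf_eq, Set.mem_singleton_iff,
    not_or] at hx
  obtain ⟨hxroot, hxe⟩ := hx
  have hxe' : x + ε ≠ 0 := fun h => hxe (by linarith)
  have hfx : x ^ 2 + (ε - c) * x - ε * Real.sin (α + β) ≠ 0 := by
    intro h; exact hxroot (by simp [hfp, Polynomial.IsRoot, h])
  simp only [Set.mem_setOf_eq]
  -- evaluate LHS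
  rw [eval_charpoly']
  -- block decomposition
  have hsplit : x • (1 : Matrix (Fin N ⊕ Fin N × Fin N) (Fin N ⊕ Fin N × Fin N) ℝ)
        - linJ N α β ε a
      = Matrix.fromBlocks (x • 1 - linA N α β a) (-(linB N α a)) (-(linC N β ε a))
          ((x + ε) • 1) := by
    ext i j
    rcases i with i | i <;> rcases j with j | j <;>
      simp [linJ, Matrix.fromBlocks, Matrix.one_apply, Matrix.sub_apply, Matrix.smul_apply] <;>
      by_cases h : i = j <;> simp [h] <;> ring
  rw [hsplit]
  haveI : Invertible ((x + ε) • (1 : Matrix (Fin N × Fin N) (Fin N × Fin N) ℝ)) := by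
    refine ⟨(x + ε)⁻¹ • 1, ?_, ?_⟩ <;>
      rw [smul_mul_smul_comm, Matrix.one_mul] <;>
      simp [inv_mul_cancel₀ hxe', mul_inv_cancel₀ hxe']
  rw [Matrix.det_fromBlocks₂₂]
  have hinv : ⅟((x + ε) • (1 : Matrix (Fin N × Fin N) (Fin N × Fin N) ℝ))
      = (x + ε)⁻¹ • 1 := by
    apply invOf_eq_right_inv
    rw [smul_mul_smul_comm, Matrix.one_mul]
    simp [mul_inv_cancel₀ hxe']
  rw [hinv]
  -- Schur complement simplification
  have hschur : (x • 1 - linA N α β a)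
        - (-(linB N α a))
          * ((x + ε)⁻¹ • (1 : Matrix (Fin N × Fin N) (Fin N × Fin N) ℝ))
          * (-(linC N β ε a))
      = (x - c - (x + ε)⁻¹ * d) • (1 : Matrix (Fin N) (Fin N) ℝ)
        + Matrix.of (fun _ _ => c / (N : ℝ) + (x + ε)⁻¹ * d / (N : ℝ)) := by
    rw [Matrix.neg_mul, Matrix.mul_neg, Matrix.neg_mul, neg_neg]
    rw [Matrix.mul_smul, Matrix.mul_one, Matrix.smul_mul]
    rw [linA_antip N hN0 α β a ha, linBC_antip N hN0 α β ε a ha]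
    ext i j
    by_cases h : i = j <;>
      simp [h, Matrix.one_apply, Matrix.sub_apply, Matrix.add_apply, Matrix.smul_apply,
        smul_eq_mul] <;> ring
  rw [hschur]
  -- determinants
  have hdet1 : ((x + ε) • (1 : Matrix (Fin N × Fin N) (Fin N × Fin N) ℝ)).det
      = (x + ε) ^ (N * N) := by
    rw [Matrix.det_smul, Matrix.det_one]
    simp [Fintype.card_prod]
  rw [hdet1]
  set g : ℝ := x - c - (x + ε)⁻¹ * d with hgdef
  have hfg : (x + ε) * g = x ^ 2 + (ε - c) * x - ε * Real.sin (α + β) := by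
    rw [hgdef, hdd, hc, Real.sin_add]
    field_simp
    ring
  have hg : g ≠ 0 := by
    intro h
    apply hfx
    rw [← hfg, h, mul_zero]
  have hgh : c / (N:ℝ) + (x + ε)⁻¹ * d / N = (c + (x + ε)⁻¹ * d) / N := by ring
  rw [det_smul_one_add_const N hN0 g (c / N + (x + ε)⁻¹ * d / N) hg]
  have hghx : g + (N : ℝ) * (c / N + (x + ε)⁻¹ * d / N) = x := by
    rw [hgdef]; field_simp; ring
  rw [hghx]
  -- RHS evaluation
  have hrhs : Polynomial.eval x
      (X * (X + C ε) ^ (N * (N - 1) + 1) * fp ^ (N - 1))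
      = x * (x + ε) ^ (N * (N - 1) + 1)
        * (x ^ 2 + (ε - c) * x - ε * Real.sin (α + β)) ^ (N - 1) := by
    simp [hfp]
  rw [hrhs, ← hfg]
  rw [mul_pow]
  obtain ⟨n, rfl⟩ : ∃ n, N = n + 2 := ⟨N - 2, by omega⟩
  have he1 : n + 2 - 1 = n + 1 := by omega
  have he2 : (n + 2) * (n + 2) = ((n + 2) * (n + 2 - 1) + 1) + (n + 2 - 1) := by
    rw [he1]; ring
  rw [he2, pow_add]
  ring
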